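/- Let λ, μ be partitions of n with λ ≤ μ in dominance order, and suppose ∑_{j=1}^m λ_j = ∑_{j=1}^m μ_j for some m ≥ 1. Then ∑_{j=1}^{μ_m} λ*_j = ∑_{j=1}^{μ_m} μ*_j. -/

import Mathlib

open Finset

/-- Partial sum `∑_{j=1}^i f j` (one-indexed). -/
def psum (f : ℕ → ℕ) (i : ℕ) : ℕ := ∑ j ∈ Finset.Icc 1 i, f j

/-- Conjugate partition: `conj f j = #{k ≥ 1 : f k ≥ j}`. -/
noncomputable def conj (f : ℕ → ℕ) (j : ℕ) : ℕ := Set.ncard {k : ℕ | 1 ≤ k ∧ j ≤ f k}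

/-- `f` is a partition of `n` (one-indexed, weakly decreasing, eventually zero). -/
def IsPartitionOf (f : ℕ → ℕ) (n : ℕ) : Prop :=
  (∀ i, 1 ≤ i → f (i + 1) ≤ f i) ∧ ∃ N, (∀ i, N < i → f i = 0) ∧ psum f N = n

/-- Weakly decreasing (from index 1 on). -/
def Decr (f : ℕ → ℕ) : Prop := ∀ i, 1 ≤ i → f (i + 1) ≤ f i

/-- `A_i = ∑_{j ≤ i} (α_j + β_j)`. -/
def AA (f g : ℕ → ℕ) (i : ℕ) : ℕ := ∑ j ∈ Finset.Icc 1 i, (f j + g j)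

/-- `B_i = ∑_{j < i} (α_j + β_j) + α_i`. -/
def BB (f g : ℕ → ℕ) (i : ℕ) : ℕ := (∑ j ∈ Finset.Icc 1 (i - 1), (f j + g j)) + f i

/-- Multiplicity of `i` as a part. -/
noncomputable def mult (f : ℕ → ℕ) (i : ℕ) : ℕ := conj f i - conj f (i + 1)

lemma decr_anti {f : ℕ → ℕ} (hf : ∀ i, 1 ≤ i → f (i + 1) ≤ f i)
    {i j : ℕ} (hi : 1 ≤ i) (hij : i ≤ j) : f j ≤ f i := by
  induction j, hij using Nat.le_induction with
  | base => exact le_refl _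
  | succ k hk ih => exact le_trans (hf k (le_trans hi hk)) ih

lemma conj_eq_card {f : ℕ → ℕ} {N : ℕ} (hN : ∀ i, N < i → f i = 0) {j : ℕ} (hj : 1 ≤ j) :
    conj f j = ((Finset.Icc 1 N).filter (fun k => j ≤ f k)).card := by
  have hset : {k : ℕ | 1 ≤ k ∧ j ≤ f k} = ↑((Finset.Icc 1 N).filter (fun k => j ≤ f k)) := by
    ext k
    simp only [Set.mem_setOf_eq, Finset.coe_filter, Finset.mem_Icc]
    constructor
    · rintro ⟨h1, h2⟩
      refine ⟨⟨h1, ?_⟩, h2⟩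
      by_contra h
      have := hN k (by omega)
      omega
    · rintro ⟨⟨h1, _⟩, h2⟩; exact ⟨h1, h2⟩
  rw [conj, hset, Set.ncard_coe_finset]

lemma psum_conj_eq {f : ℕ → ℕ} {N : ℕ} (hN : ∀ i, N < i → f i = 0) (t : ℕ) :
    psum (conj f) t = ∑ k ∈ Finset.Icc 1 N, min (f k) t := by
  rw [psum]
  have h1 : ∀ j ∈ Finset.Icc 1 t,
      conj f j = ∑ k ∈ Finset.Icc 1 N, if j ≤ f k then 1 else 0 := by
    intro j hj
    rw [conj_eq_card hN (Finset.mem_Icc.mp hj).1, Finset.card_filter]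
  rw [Finset.sum_congr rfl h1, Finset.sum_comm]
  refine Finset.sum_congr rfl fun k _ => ?_
  rw [← Finset.card_filter]
  have : (Finset.Icc 1 t).filter (fun j => j ≤ f k) = Finset.Icc 1 (min (f k) t) := by
    ext j
    simp only [Finset.mem_filter, Finset.mem_Icc]
    omega
  rw [this, Nat.card_Icc]
  omega

lemma psum_stable {f : ℕ → ℕ} {N M : ℕ} (hNM : N ≤ M) (hN : ∀ i, N < i → f i = 0) :
    psum f M = psum f N := by
  rw [psum, psum]
  symm
  apply Finset.sum_subset (Finset.Icc_subset_Icc_right hNM)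
  intro x hx hx'
  simp only [Finset.mem_Icc] at hx hx'
  exact hN x (by omega)

theorem stmt4 (n : ℕ) (l m : ℕ → ℕ) (hl : IsPartitionOf l n) (hm : IsPartitionOf m n)
    (hdom : ∀ i, 1 ≤ i → psum l i ≤ psum m i)
    (m₀ : ℕ) (hm₀ : 1 ≤ m₀) (heq : psum l m₀ = psum m m₀) :
    psum (conj l) (m m₀) = psum (conj m) (m m₀) := by
  obtain ⟨hldec, Nl, hNl, hsl⟩ := hl
  obtain ⟨hmdec, Nm, hNm, hsm⟩ := hm
  set t := m m₀ with ht
  set N := max Nl (max Nm m₀) with hNdef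
  have hNlN : Nl ≤ N := le_max_left _ _
  have hNmN : Nm ≤ N := le_trans (le_max_left _ _) (le_max_right _ _)
  have hm₀N : m₀ ≤ N := le_trans (le_max_right _ _) (le_max_right _ _)
  have hNl' : ∀ i, N < i → l i = 0 := fun i hi => hNl i (by omega)
  have hNm' : ∀ i, N < i → m i = 0 := fun i hi => hNm i (by omega)
  have hslN : ∑ k ∈ Finset.Icc 1 N, l k = n := by
    have := psum_stable hNlN hNl
    rw [psum] at this; omega
  have hsmN : ∑ k ∈ Finset.Icc 1 N, m k = n := by
    have := psum_stable hNmN hNm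
    rw [psum] at this; omega
  set Sl := ∑ k ∈ Finset.Icc 1 N, (l k - t) with hSl
  set Sm := ∑ k ∈ Finset.Icc 1 N, (m k - t) with hSm
  -- split of total sums
  have splitl : psum (conj l) t + Sl = n := by
    rw [psum_conj_eq hNl' t, hSl, ← Finset.sum_add_distrib, ← hslN]
    exact Finset.sum_congr rfl fun k _ => by omega
  have splitm : psum (conj m) t + Sm = n := by
    rw [psum_conj_eq hNm' t, hSm, ← Finset.sum_add_distrib, ← hsmN]
    exact Finset.sum_congr rfl fun k _ => by omega
  -- Sm = psum m m₀ - m₀ * t, exactly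
  have hmk_ge : ∀ k, 1 ≤ k → k ≤ m₀ → t ≤ m k := fun k h1 h2 => decr_anti hmdec h1 h2
  have hmk_le : ∀ k, m₀ < k → m k ≤ t := fun k hk => decr_anti hmdec hm₀ (le_of_lt hk)
  have hSm_trunc : Sm = ∑ k ∈ Finset.Icc 1 m₀, (m k - t) := by
    rw [hSm]
    symm
    apply Finset.sum_subset (Finset.Icc_subset_Icc_right hm₀N)
    intro x hx hx'
    simp only [Finset.mem_Icc] at hx hx'
    have := hmk_le x (by omega)
    omega
  have hSm_eq : Sm + m₀ * t = psum m m₀ := by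
    rw [hSm_trunc, psum]
    have : m₀ * t = ∑ _k ∈ Finset.Icc 1 m₀, t := by
      rw [Finset.sum_const, Nat.card_Icc, smul_eq_mul, Nat.add_sub_cancel]
    rw [this, ← Finset.sum_add_distrib]
    refine Finset.sum_congr rfl fun k hk => ?_
    simp only [Finset.mem_Icc] at hk
    have := hmk_ge k hk.1 hk.2
    omega
  -- Sm ≤ Sl
  have h1 : Sm ≤ Sl := by
    have sub : ∑ k ∈ Finset.Icc 1 m₀, (l k - t) ≤ Sl := by
      rw [hSl]
      exact Finset.sum_le_sum_of_subset (Finset.Icc_subset_Icc_right hm₀N)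
    have low : psum l m₀ ≤ (∑ k ∈ Finset.Icc 1 m₀, (l k - t)) + m₀ * t := by
      rw [psum]
      have : m₀ * t = ∑ _k ∈ Finset.Icc 1 m₀, t := by
        rw [Finset.sum_const, Nat.card_Icc, smul_eq_mul, Nat.add_sub_cancel]
      rw [this, ← Finset.sum_add_distrib]
      exact Finset.sum_le_sum fun k _ => by omega
    omega
  -- Sl ≤ Sm
  have h2 : Sl ≤ Sm := by
    set r := Nat.findGreatest (fun i => t + 1 ≤ l i) N with hr
    have hrN : r ≤ N := Nat.findGreatest_le N
    have hgt : ∀ k, r < k → k ≤ N → l k ≤ t := by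
      intro k hk1 hk2
      have := Nat.findGreatest_is_greatest (P := fun i => t + 1 ≤ l i) hk1 hk2
      omega
    have hSl_trunc : Sl = ∑ k ∈ Finset.Icc 1 r, (l k - t) := by
      rw [hSl]
      symm
      apply Finset.sum_subset (Finset.Icc_subset_Icc_right hrN)
      intro x hx hx'
      simp only [Finset.mem_Icc] at hx hx'
      have := hgt x (by omega) hx.2
      omega
    rcases Nat.eq_zero_or_pos r with hr0 | hrpos
    · rw [hSl_trunc, hr0]
      simp
    · have hlr : t + 1 ≤ l r :=
        Nat.findGreatest_of_ne_zero (P := fun i => t + 1 ≤ l i) hr.symm (by omega)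
      have hSl_eq : Sl + r * t = psum l r := by
        rw [hSl_trunc, psum]
        have hc : r * t = ∑ _k ∈ Finset.Icc 1 r, t := by
          rw [Finset.sum_const, Nat.card_Icc, smul_eq_mul, Nat.add_sub_cancel]
        rw [hc, ← Finset.sum_add_distrib]
        refine Finset.sum_congr rfl fun k hk => ?_
        simp only [Finset.mem_Icc] at hk
        have := decr_anti hldec hk.1 hk.2
        omega
      have hd : psum l r ≤ psum m r := hdom r hrpos
      have hup : psum m r ≤ (∑ k ∈ Finset.Icc 1 r, (m k - t)) + r * t := by
        rw [psum]
        have hc : r * t = ∑ _k ∈ Finset.Icc 1 r, t := by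
          rw [Finset.sum_const, Nat.card_Icc, smul_eq_mul, Nat.add_sub_cancel]
        rw [hc, ← Finset.sum_add_distrib]
        exact Finset.sum_le_sum fun k _ => by omega
      have hsub : (∑ k ∈ Finset.Icc 1 r, (m k - t)) ≤ Sm := by
        rw [hSm]
        exact Finset.sum_le_sum_of_subset (Finset.Icc_subset_Icc_right hrN)
      omega
  omega
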